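/- Let R be a commutative ring, V = R^{n+1}, e, e* with e*e = 1, and τ ∈ End(V) stable (e and e* both τ-cyclic). Then the compression τ_H ∈ End(V_H) is cyclic; more precisely, the functional ℓ ∈ V_H* defined by ℓ(v) = e*τv is a cyclic vector for the action of τ_H^* on V_H*. -/

import Mathlib

section GGP

variable {R V : Type*} [CommRing R] [AddCommGroup V] [Module R V]

/-- The projection `1_H = 1 - e e*` onto `V_H = ker e*` along `e`. -/
def oneH (e : V) (eStar : Module.Dual R V) : Module.End R V :=
  LinearMap.id - eStar.smulRight e

/-- The compression `τ_H = 1_H τ 1_H` of `τ`, as an endomorphism of `V_H = ker e*`. -/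
def tauH (e : V) (eStar : Module.Dual R V) (h : eStar e = 1) (τ : Module.End R V) :
    Module.End R (LinearMap.ker eStar) :=
  LinearMap.restrict (oneH e eStar ∘ₗ τ)
    (p := LinearMap.ker eStar) (q := LinearMap.ker eStar)
    (fun x _ => by
      simp [oneH, LinearMap.mem_ker, LinearMap.sub_apply, LinearMap.smulRight_apply,
        map_smul, smul_eq_mul, h])

end GGP


section aux
variable {R V : Type*} [CommRing R] [AddCommGroup V] [Module R V]

lemma oneH_apply (e : V) (eStar : Module.Dual R V) (x : V) :
    oneH e eStar x = x - eStar x • e := rfl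

lemma tauH_coe (e : V) (eStar : Module.Dual R V) (h : eStar e = 1) (τ : Module.End R V)
    (x : LinearMap.ker eStar) :
    (tauH e eStar h τ x : V) = τ x - eStar (τ x) • e := rfl

variable (e : V) (eStar : Module.Dual R V) (h : eStar e = 1) (τ : Module.End R V)

/-- the cyclic vector `v = 1_H τ e` -/
def vH : LinearMap.ker eStar :=
  ⟨τ e - eStar (τ e) • e, by simp [LinearMap.mem_ker, h]⟩

/-- Key recursion, cyclic side: `1_H τ^m e` lies in the `τ_H`-orbit span of `v`. -/
lemma cyc_pow (m : ℕ) : ∃ q : Polynomial R,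
    ((Polynomial.aeval (tauH e eStar h τ) q (vH e eStar h τ) : LinearMap.ker eStar) : V)
      = (τ ^ m) e - eStar ((τ ^ m) e) • e := by
  induction m with
  | zero =>
    exact ⟨0, by simp [h]⟩
  | succ m ih =>
    obtain ⟨q, hq⟩ := ih
    refine ⟨Polynomial.X * q + Polynomial.C (eStar ((τ ^ m) e)), ?_⟩
    set w := Polynomial.aeval (tauH e eStar h τ) q (vH e eStar h τ) with hw
    have : Polynomial.aeval (tauH e eStar h τ)
        (Polynomial.X * q + Polynomial.C (eStar ((τ ^ m) e))) (vH e eStar h τ)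
        = tauH e eStar h τ w + eStar ((τ ^ m) e) • vH e eStar h τ := by
      simp [map_add, map_mul, Polynomial.aeval_X, Polynomial.aeval_C,
        Module.algebraMap_end_apply, ← hw, Module.End.mul_apply]
    rw [this]
    push_cast [tauH_coe, vH]
    rw [hq]
    have hpow : (τ ^ (m + 1)) e = τ ((τ ^ m) e) := by
      rw [pow_succ', Module.End.mul_apply]
    simp only [map_sub, map_smul, hpow, smul_eq_mul]
    module

lemma cyc_poly (p : Polynomial R) : ∃ q : Polynomial R,
    ((Polynomial.aeval (tauH e eStar h τ) q (vH e eStar h τ) : LinearMap.ker eStar) : V)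
      = Polynomial.aeval τ p e - eStar (Polynomial.aeval τ p e) • e := by
  induction p using Polynomial.induction_on' with
  | add p₁ p₂ ih₁ ih₂ =>
    obtain ⟨q₁, hq₁⟩ := ih₁
    obtain ⟨q₂, hq₂⟩ := ih₂
    refine ⟨q₁ + q₂, ?_⟩
    push_cast [map_add, LinearMap.add_apply, hq₁, hq₂]
    module
  | monomial m a =>
    obtain ⟨q, hq⟩ := cyc_pow e eStar h τ m
    refine ⟨Polynomial.C a * q, ?_⟩
    have lhs : ((Polynomial.aeval (tauH e eStar h τ) (Polynomial.C a * q)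
        (vH e eStar h τ) : LinearMap.ker eStar) : V)
        = a • ((Polynomial.aeval (tauH e eStar h τ) q (vH e eStar h τ)
          : LinearMap.ker eStar) : V) := by
      simp [map_mul, Polynomial.aeval_C, Module.End.mul_apply,
        Module.algebraMap_end_apply]
    rw [lhs, hq]
    simp [Polynomial.aeval_monomial, Module.End.mul_apply,
      Module.algebraMap_end_apply, smul_smul, mul_comm]
    module

/-- Key recursion, dual side. -/
lemma cocyc_pow (m : ℕ) : ∃ q : Polynomial R, ∀ w : LinearMap.ker eStar,
    eStar ((τ ^ m) (w : V))
      = eStar (τ ((Polynomial.aeval (tauH e eStar h τ) q w : LinearMap.ker eStar) : V)) := by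
  induction m with
  | zero =>
    refine ⟨0, fun w => ?_⟩
    simp [w.2, LinearMap.mem_ker.mp w.2]
  | succ m ih =>
    obtain ⟨q, hq⟩ := ih
    refine ⟨q * Polynomial.X + Polynomial.C (eStar ((τ ^ m) e)), fun w => ?_⟩
    have expand : Polynomial.aeval (tauH e eStar h τ)
        (q * Polynomial.X + Polynomial.C (eStar ((τ ^ m) e))) w
        = Polynomial.aeval (tauH e eStar h τ) q (tauH e eStar h τ w)
          + eStar ((τ ^ m) e) • w := by
      simp [map_add, map_mul, Polynomial.aeval_X, Polynomial.aeval_C,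
        Module.algebraMap_end_apply, Module.End.mul_apply]
    rw [expand]
    have hIH := hq (tauH e eStar h τ w)
    have hcoe : ((tauH e eStar h τ w : LinearMap.ker eStar) : V)
        = τ w - eStar (τ w) • e := rfl
    rw [hcoe] at hIH
    have hpow : (τ ^ (m + 1)) (w : V) = (τ ^ m) (τ (w : V)) := by
      rw [pow_succ, Module.End.mul_apply]
    push_cast [hpow]
    rw [map_add, map_smul, map_add, map_smul, ← hIH]
    simp only [map_sub, map_smul, smul_eq_mul]
    ring

lemma cocyc_poly (p : Polynomial R) : ∃ q : Polynomial R, ∀ w : LinearMap.ker eStar,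
    eStar (Polynomial.aeval τ p (w : V))
      = eStar (τ ((Polynomial.aeval (tauH e eStar h τ) q w : LinearMap.ker eStar) : V)) := by
  induction p using Polynomial.induction_on' with
  | add p₁ p₂ ih₁ ih₂ =>
    obtain ⟨q₁, hq₁⟩ := ih₁
    obtain ⟨q₂, hq₂⟩ := ih₂
    refine ⟨q₁ + q₂, fun w => ?_⟩
    push_cast [map_add, LinearMap.add_apply, hq₁ w, hq₂ w]
    ring
  | monomial m a =>
    obtain ⟨q, hq⟩ := cocyc_pow e eStar h τ m
    refine ⟨Polynomial.C a * q, fun w => ?_⟩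
    simp only [Polynomial.aeval_monomial, map_mul, Polynomial.aeval_C,
      Module.End.mul_apply, Module.algebraMap_end_apply, map_smul, smul_eq_mul, hq w]
    push_cast [map_smul, smul_eq_mul]
    ring

end aux

/-- Let `R` be a commutative ring, `V = R^{n+1}`, `e, e*` with `e*e = 1`, and `τ` stable
(`e` and `e*` both `τ`-cyclic).  Then the compression `τ_H ∈ End(V_H)` is cyclic; more
precisely, the functional `ℓ(v) = e* τ v` on `V_H` is a cyclic vector for the transpose of
`τ_H` acting on `V_H^*`. -/
theorem stmt_11 {R V : Type*} [CommRing R] [AddCommGroup V] [Module R V]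
    [Module.Free R V] [Module.Finite R V]
    (n : ℕ) (hrank : Module.finrank R V = n + 1)
    (e : V) (eStar : Module.Dual R V) (h : eStar e = 1)
    (τ : Module.End R V)
    (hcyc : ∀ w : V, ∃ p : Polynomial R, Polynomial.aeval τ p e = w)
    (hcocyc : ∀ φ : Module.Dual R V, ∃ p : Polynomial R,
      LinearMap.dualMap (Polynomial.aeval τ p : V →ₗ[R] V) eStar = φ) :
    (∃ v : LinearMap.ker eStar, ∀ w : LinearMap.ker eStar,
      ∃ p : Polynomial R, Polynomial.aeval (tauH e eStar h τ) p v = w) ∧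
    (∀ φ : Module.Dual R (LinearMap.ker eStar), ∃ p : Polynomial R,
      LinearMap.dualMap
        (Polynomial.aeval (tauH e eStar h τ) p :
          LinearMap.ker eStar →ₗ[R] LinearMap.ker eStar)
        (eStar ∘ₗ (τ : V →ₗ[R] V) ∘ₗ (LinearMap.ker eStar).subtype) = φ) := by
  constructor
  · refine ⟨vH e eStar h τ, fun w => ?_⟩
    obtain ⟨p, hp⟩ := hcyc (w : V)
    obtain ⟨q, hq⟩ := cyc_poly e eStar h τ p
    refine ⟨q, Subtype.ext ?_⟩
    rw [hq, hp]
    have hw : eStar (w : V) = 0 := LinearMap.mem_ker.mp w.2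
    rw [hw]
    simp
  · intro φ
    set proj : V →ₗ[R] LinearMap.ker eStar :=
      LinearMap.codRestrict (LinearMap.ker eStar) (oneH e eStar)
        (fun x => by simp [LinearMap.mem_ker, oneH_apply, h]) with hproj
    obtain ⟨p, hp⟩ := hcocyc (φ ∘ₗ proj)
    obtain ⟨q, hq⟩ := cocyc_poly e eStar h τ p
    refine ⟨q, ?_⟩
    ext w
    have h1 : eStar (Polynomial.aeval τ p (w : V)) = φ (proj (w : V)) := by
      have := congrArg (fun f : Module.Dual R V => f (w : V)) hp
      simpa using this
    have h2 : proj (w : V) = w := by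
      apply Subtype.ext
      have hw : eStar (w : V) = 0 := LinearMap.mem_ker.mp w.2
      simp only [hproj]
      exact (show oneH e eStar (w : V) = w by rw [oneH_apply, hw, zero_smul, sub_zero])
    have h3 := hq w
    simp only [LinearMap.dualMap_apply, LinearMap.coe_comp, Function.comp_apply,
      Submodule.coe_subtype]
    rw [← h3, h1, h2]
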